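/- For the random tribonacci substitution τ: a ↦ {ab, ba}, b ↦ {ac, ca}, c ↦ {a}, every word in τⁿ(a) has length t_{n+2}, every word in τⁿ(b) has length t_n + t_{n+1}, and every word in τⁿ(c) has length t_{n+1}, where t is the tribonacci sequence (t_0 = 0, t_1 = t_2 = 1, t_n = t_{n-1} + t_{n-2} + t_{n-3}). -/
import Mathlib

inductive ABC : Type
  | a : ABC
  | b : ABC
  | c : ABC
deriving DecidableEq

def substW (θ : ABC → Set (List ABC)) : List ABC → Set (List ABC)
  | [] => {[]}
  | x :: w => {u | ∃ v ∈ θ x, ∃ t ∈ substW θ w, u = v ++ t}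

def substS (θ : ABC → Set (List ABC)) (A : Set (List ABC)) : Set (List ABC) :=
  ⋃ w ∈ A, substW θ w

def substIter (θ : ABC → Set (List ABC)) (n : ℕ) (x : ABC) : Set (List ABC) :=
  (substS θ)^[n] {[x]}

def randTrib : ABC → Set (List ABC)
  | ABC.a => {[ABC.a, ABC.b], [ABC.b, ABC.a]}
  | ABC.b => {[ABC.a, ABC.c], [ABC.c, ABC.a]}
  | ABC.c => {[ABC.a]}

def trib : ℕ → ℕ
  | 0 => 0
  | 1 => 1
  | 2 => 1
  | n + 3 => trib (n + 2) + trib (n + 1) + trib n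

/-- Letter counts of level-`n` inflation words. -/
def cnt : ℕ → ABC → ℕ × ℕ × ℕ
  | 0, ABC.a => (1, 0, 0)
  | 0, ABC.b => (0, 1, 0)
  | 0, ABC.c => (0, 0, 1)
  | n + 1, x =>
      ((cnt n x).1 + (cnt n x).2.1 + (cnt n x).2.2, (cnt n x).1, (cnt n x).2.1)

lemma cnt_succ (n : ℕ) (x : ABC) : cnt (n + 1) x =
    ((cnt n x).1 + (cnt n x).2.1 + (cnt n x).2.2, (cnt n x).1, (cnt n x).2.1) := by
  cases x <;> rfl

lemma length_eq_counts (w : List ABC) :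
    w.length = w.count ABC.a + w.count ABC.b + w.count ABC.c := by
  induction w with
  | nil => simp
  | cons x w ih =>
    cases x <;> simp [List.count_cons, ih] <;> omega

lemma counts_substW : ∀ (w u : List ABC), u ∈ substW randTrib w →
    u.count ABC.a = w.length ∧ u.count ABC.b = w.count ABC.a ∧
      u.count ABC.c = w.count ABC.b := by
  intro w
  induction w with
  | nil =>
    intro u hu
    simp only [substW, Set.mem_singleton_iff] at hu
    subst hu; simp
  | cons x w ih =>
    intro u hu
    obtain ⟨v, hv, t, ht, rfl⟩ := hu
    obtain ⟨h1, h2, h3⟩ := ih t ht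
    cases x <;> simp only [randTrib, Set.mem_insert_iff, Set.mem_singleton_iff] at hv <;>
      rcases hv with rfl | rfl <;>
      simp_all [List.count_append, List.count_cons]

lemma counts_iter : ∀ (n : ℕ) (x : ABC) (w : List ABC), w ∈ substIter randTrib n x →
    (w.count ABC.a, w.count ABC.b, w.count ABC.c) = cnt n x := by
  intro n
  induction n with
  | zero =>
    intro x w hw
    simp only [substIter, Function.iterate_zero, id, Set.mem_singleton_iff] at hw
    subst hw
    cases x <;> rfl
  | succ n ih =>
    intro x w hw
    rw [substIter, Function.iterate_succ_apply'] at hw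
    obtain ⟨_, ⟨v, rfl⟩, _, ⟨hv, rfl⟩, hw⟩ := hw
    have h1 := counts_substW v w hw
    have h2 := ih x v hv
    have h3 := length_eq_counts v
    have e1 := congrArg Prod.fst h2
    have e2 := congrArg (fun p => p.2.1) h2
    have e3 := congrArg (fun p => p.2.2) h2
    simp only at e1 e2 e3
    rw [cnt_succ, Prod.mk.injEq, Prod.mk.injEq]
    refine ⟨?_, ?_, ?_⟩ <;> omega

lemma cnt_a : ∀ n, cnt (n + 1) ABC.a = (trib (n + 2), trib (n + 1), trib n) := by
  intro n
  induction n with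
  | zero => rfl
  | succ n ih => rw [cnt_succ, ih]; rfl

lemma cnt_c : ∀ n, cnt (n + 2) ABC.c = (trib (n + 2), trib (n + 1), trib n) := by
  intro n
  induction n with
  | zero => rfl
  | succ n ih => rw [cnt_succ, ih]; rfl

lemma cnt_b : ∀ n, cnt (n + 3) ABC.b =
    (trib (n + 3) + trib (n + 2), trib (n + 2) + trib (n + 1),
      trib (n + 1) + trib n) := by
  intro n
  induction n with
  | zero => rfl
  | succ n ih =>
    rw [cnt_succ, ih]
    refine Prod.ext ?_ rfl
    show _ = trib (n + 4) + trib (n + 3)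
    rw [show trib (n + 4) = trib (n + 3) + trib (n + 2) + trib (n + 1) from rfl,
      show trib (n + 3) = trib (n + 2) + trib (n + 1) + trib n from rfl]
    ring

/-- Lengths of level-`n` inflation words of the random tribonacci substitution. -/
theorem randTrib_inflation_lengths (n : ℕ) :
    (∀ w ∈ substIter randTrib n ABC.a, w.length = trib (n + 2)) ∧
    (∀ w ∈ substIter randTrib n ABC.b, w.length = trib n + trib (n + 1)) ∧
    (∀ w ∈ substIter randTrib n ABC.c, w.length = trib (n + 1)) := by
  have key : ∀ x w, w ∈ substIter randTrib n x →
      w.length = (cnt n x).1 + (cnt n x).2.1 + (cnt n x).2.2 := by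
    intro x w hw
    have h := counts_iter n x w hw
    have h1 := congrArg Prod.fst h
    have h2 := congrArg (fun p => p.2.1) h
    have h3 := congrArg (fun p => p.2.2) h
    simp only at h1 h2 h3
    rw [length_eq_counts, h1, h2, h3]
  refine ⟨fun w hw => ?_, fun w hw => ?_, fun w hw => ?_⟩
  · rw [key ABC.a w hw]
    cases n with
    | zero => rfl
    | succ m =>
      rw [cnt_a m]
      show trib (m + 2) + trib (m + 1) + trib m = trib (m + 3)
      rfl
  · rw [key ABC.b w hw]
    match n with
    | 0 => rfl
    | 1 => rfl
    | 2 => rfl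
    | (m + 3) =>
      rw [cnt_b m]
      show trib (m + 3) + trib (m + 2) + (trib (m + 2) + trib (m + 1)) +
        (trib (m + 1) + trib m) = trib (m + 3) + trib (m + 4)
      rw [show trib (m + 4) = trib (m + 3) + trib (m + 2) + trib (m + 1) from rfl,
        show trib (m + 3) = trib (m + 2) + trib (m + 1) + trib m from rfl]
      ring
  · rw [key ABC.c w hw]
    match n with
    | 0 => rfl
    | 1 => rfl
    | (m + 2) =>
      rw [cnt_c m]
      show trib (m + 2) + trib (m + 1) + trib m = trib (m + 3)
      rfl
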